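/- arXiv:2510.17453 — 4 statements merged into one kernel-verified Lean document; each statement's English description precedes it below -/
import Mathlib

section
/- Let a₁, a₂, a₃, b₁, b₂, b₃ ∈ ℝ² be six mutually distinct points satisfying b₁ − a₁ = b₂ − a₂ = b₃ − a₃. Then one of these six points lies in the convex hull of some three of the remaining five points. -/
lemma mem3_aux {E : Type*} [AddCommGroup E] [Module ℝ E] (x p q r : E) (α β γ : ℝ)
    (hα : 0 ≤ α) (hβ : 0 ≤ β) (hγ : 0 ≤ γ) (hsum : α + β + γ = 1)
    (hx : x = α • p + β • q + γ • r) : x ∈ convexHull ℝ ({p, q, r} : Set E) := by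
  have hc : Convex ℝ (convexHull ℝ ({p, q, r} : Set E)) := convex_convexHull ℝ _
  have key := hc.sum_mem (t := (Finset.univ : Finset (Fin 3))) (w := ![α, β, γ])
    (z := ![p, q, r]) ?_ ?_ ?_
  · simpa [Fin.sum_univ_three, hx] using key
  · intro i _; fin_cases i <;> simpa
  · simp [Fin.sum_univ_three, hsum]
  · intro i _
    apply subset_convexHull ℝ ({p, q, r} : Set E)
    fin_cases i <;> simp

lemma parallel_aux (v u : EuclideanSpace ℝ (Fin 2)) (hv : v ≠ 0)
    (h : v 0 * u 1 - v 1 * u 0 = 0) : ∃ l : ℝ, u = l • v := by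
  have hcases : v 0 ≠ 0 ∨ v 1 ≠ 0 := by
    by_contra hcon
    push_neg at hcon
    exact hv (by ext i; fin_cases i <;> simp [hcon.1, hcon.2])
  rcases hcases with h0 | h1
  · refine ⟨u 0 / v 0, ?_⟩
    ext i; fin_cases i <;> simp [PiLp.smul_apply] <;> field_simp <;> nlinarith [h]
  · refine ⟨u 1 / v 1, ?_⟩
    ext i; fin_cases i <;> simp [PiLp.smul_apply] <;> field_simp <;> nlinarith [h]

lemma middle_aux (v a b c : EuclideanSpace ℝ (Fin 2)) (s : Set (EuclideanSpace ℝ (Fin 2)))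
    (hv : v ≠ 0)
    (hab : v 0 * a 1 - v 1 * a 0 ≤ v 0 * b 1 - v 1 * b 0)
    (hbc : v 0 * b 1 - v 1 * b 0 ≤ v 0 * c 1 - v 1 * c 0)
    (hsa : a ∈ s) (hsb : b ∈ s) (hsc : c ∈ s)
    (hsa' : a + v ∈ s) (hsb' : b + v ∈ s) (hsc' : c + v ∈ s)
    (nab : a ≠ b) (nac : a ≠ c) (nbc : b ≠ c)
    (nab' : a ≠ b + v) (nac' : a ≠ c + v) (nba' : b ≠ a + v)
    (nbc' : b ≠ c + v) (ncb' : c ≠ b + v) :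
    ∃ x y z w, x ∈ s ∧ y ∈ s ∧ z ∈ s ∧ w ∈ s ∧
      x ≠ y ∧ x ≠ z ∧ x ≠ w ∧ y ≠ z ∧ y ≠ w ∧ z ≠ w ∧
      x ∈ convexHull ℝ ({y, z, w} : Set (EuclideanSpace ℝ (Fin 2))) := by
  have hxx : ∀ x : EuclideanSpace ℝ (Fin 2), x ≠ x + v :=
    fun x h => hv (by simpa [left_eq_add] using h)
  have hinj : ∀ x y : EuclideanSpace ℝ (Fin 2), x ≠ y → x + v ≠ y + v :=
    fun x y h hxy => h (by simpa using hxy)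
  obtain ⟨t, ht0, ht1, ht⟩ : ∃ t : ℝ, 0 ≤ t ∧ t ≤ 1 ∧
      v 0 * b 1 - v 1 * b 0 =
        (1 - t) * (v 0 * a 1 - v 1 * a 0) + t * (v 0 * c 1 - v 1 * c 0) := by
    by_cases hd : v 0 * c 1 - v 1 * c 0 = v 0 * a 1 - v 1 * a 0
    · exact ⟨0, le_refl _, zero_le_one, by rw [hd] at hbc; linarith⟩
    · have hpos : 0 < (v 0 * c 1 - v 1 * c 0) - (v 0 * a 1 - v 1 * a 0) := by
        rcases lt_or_eq_of_le (hab.trans hbc) with h | h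
        · linarith
        · exact absurd h.symm hd
      refine ⟨((v 0 * b 1 - v 1 * b 0) - (v 0 * a 1 - v 1 * a 0)) /
          ((v 0 * c 1 - v 1 * c 0) - (v 0 * a 1 - v 1 * a 0)), ?_, ?_, ?_⟩
      · apply div_nonneg <;> linarith
      · rw [div_le_one hpos]; linarith
      · field_simp
        ring
  have hperp : v 0 * (b - ((1-t)•a + t•c)) 1 - v 1 * (b - ((1-t)•a + t•c)) 0 = 0 := by
    simp only [PiLp.sub_apply, PiLp.add_apply, PiLp.smul_apply, smul_eq_mul]
    linear_combination ht
  obtain ⟨l, hl⟩ := parallel_aux v _ hv hperp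
  have hb : b = (1-t)•a + t•c + l•v := by
    have := sub_eq_iff_eq_add.mp hl
    rw [this]; abel
  rcases le_total 1 l with h1 | h1
  · -- l ≥ 1 : b ∈ conv {a+v, c+v, b+v}
    have hl0 : (0:ℝ) < l := by linarith
    refine ⟨b, a+v, c+v, b+v, hsb, hsa', hsc', hsb', nba', nbc', hxx b,
      hinj _ _ nac, hinj _ _ nab, hinj _ _ nbc.symm,
      mem3_aux _ _ _ _ ((1-t)/l) (t/l) ((l-1)/l)
        (by apply div_nonneg <;> linarith) (by apply div_nonneg <;> linarith)
        (by apply div_nonneg <;> linarith) (by field_simp; ring) ?_⟩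
    rw [hb]
    match_scalars <;> field_simp <;> ring
  rcases le_total 0 l with h2 | h2
  · -- 0 ≤ l ≤ 1
    rcases le_total t l with h3 | h3
    · -- b ∈ conv {a, a+v, c+v}
      refine ⟨b, a, a+v, c+v, hsb, hsa, hsa', hsc', nab.symm, nba', nbc',
        hxx a, nac', hinj _ _ nac,
        mem3_aux _ _ _ _ (1-l) (l-t) t (by linarith) (by linarith) ht0
          (by ring) ?_⟩
      rw [hb]; module
    · -- b ∈ conv {a, c, c+v}
      refine ⟨b, a, c, c+v, hsb, hsa, hsc, hsc', nab.symm, nbc, nbc',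
        nac, nac', hxx c,
        mem3_aux _ _ _ _ (1-t) (t-l) l (by linarith) (by linarith) h2
          (by ring) ?_⟩
      rw [hb]; module
  rcases le_total (-1) l with h4 | h4
  · -- -1 ≤ l ≤ 0
    rcases le_total t (l+1) with h3 | h3
    · -- b+v ∈ conv {a, a+v, c+v}
      refine ⟨b+v, a, a+v, c+v, hsb', hsa, hsa', hsc', nab'.symm,
        hinj _ _ nab.symm, hinj _ _ nbc, hxx a, nac', hinj _ _ nac,
        mem3_aux _ _ _ _ (-l) (l+1-t) t (by linarith) (by linarith) ht0
          (by ring) ?_⟩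
      rw [hb]; module
    · -- b+v ∈ conv {a, c, c+v}
      refine ⟨b+v, a, c, c+v, hsb', hsa, hsc, hsc', nab'.symm, ncb'.symm,
        hinj _ _ nbc, nac, nac', hxx c,
        mem3_aux _ _ _ _ (1-t) (t-(l+1)) (l+1) (by linarith) (by linarith)
          (by linarith) (by ring) ?_⟩
      rw [hb]; module
  · -- l ≤ -1 : b+v ∈ conv {a, c, b}
    have hl0 : l < 0 := by linarith
    refine ⟨b+v, a, c, b, hsb', hsa, hsc, hsb, nab'.symm, ncb'.symm,
      (hxx b).symm, nac, nab, nbc.symm,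
      mem3_aux _ _ _ _ (-(1-t)/l) (-t/l) ((l+1)/l)
        (by apply div_nonneg_of_nonpos <;> linarith)
        (by apply div_nonneg_of_nonpos <;> linarith)
        (by apply div_nonneg_of_nonpos <;> linarith)
        (by field_simp [hl0.ne]; ring) ?_⟩
    rw [hb]
    match_scalars <;> field_simp [hl0.ne] <;> ring

theorem point_in_convex_hull_of_three_others
    (a₁ a₂ a₃ b₁ b₂ b₃ : EuclideanSpace ℝ (Fin 2))
    (hdist : [a₁, a₂, a₃, b₁, b₂, b₃].Pairwise (· ≠ ·))
    (h₁₂ : b₁ - a₁ = b₂ - a₂) (h₂₃ : b₂ - a₂ = b₃ - a₃) :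
    ∃ x y z w : EuclideanSpace ℝ (Fin 2),
      x ∈ ({a₁, a₂, a₃, b₁, b₂, b₃} : Set (EuclideanSpace ℝ (Fin 2))) ∧
      y ∈ ({a₁, a₂, a₃, b₁, b₂, b₃} : Set (EuclideanSpace ℝ (Fin 2))) ∧
      z ∈ ({a₁, a₂, a₃, b₁, b₂, b₃} : Set (EuclideanSpace ℝ (Fin 2))) ∧
      w ∈ ({a₁, a₂, a₃, b₁, b₂, b₃} : Set (EuclideanSpace ℝ (Fin 2))) ∧
      x ≠ y ∧ x ≠ z ∧ x ≠ w ∧ y ≠ z ∧ y ≠ w ∧ z ≠ w ∧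
      x ∈ convexHull ℝ ({y, z, w} : Set (EuclideanSpace ℝ (Fin 2))) := by
  simp only [List.pairwise_cons, List.mem_cons, List.mem_singleton, List.not_mem_nil,
    forall_eq_or_imp, forall_eq, List.Pairwise.nil] at hdist
  obtain ⟨⟨n12, n13, n1b1, n1b2, n1b3, -⟩, ⟨n23, n2b1, n2b2, n2b3, -⟩,
    ⟨n3b1, n3b2, n3b3, -⟩, -, -, -, -⟩ := hdist
  obtain ⟨v, hv, rfl, rfl, rfl⟩ :
      ∃ v : EuclideanSpace ℝ (Fin 2), v ≠ 0 ∧ b₁ = a₁ + v ∧ b₂ = a₂ + v ∧ b₃ = a₃ + v := by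
    refine ⟨b₁ - a₁, sub_ne_zero.mpr (Ne.symm n1b1), by abel, ?_, ?_⟩
    · rw [h₁₂]; abel
    · rw [h₁₂, h₂₃]; abel
  set S : Set (EuclideanSpace ℝ (Fin 2)) :=
    {a₁, a₂, a₃, a₁ + v, a₂ + v, a₃ + v} with hS
  rcases le_total (v 0 * a₁ 1 - v 1 * a₁ 0) (v 0 * a₂ 1 - v 1 * a₂ 0) with h12 | h12 <;>
    rcases le_total (v 0 * a₂ 1 - v 1 * a₂ 0) (v 0 * a₃ 1 - v 1 * a₃ 0) with h23 | h23 <;>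
    rcases le_total (v 0 * a₁ 1 - v 1 * a₁ 0) (v 0 * a₃ 1 - v 1 * a₃ 0) with h13 | h13
  · exact middle_aux v a₁ a₂ a₃ S hv h12 h23 (by simp [hS]) (by simp [hS]) (by simp [hS])
      (by simp [hS]) (by simp [hS]) (by simp [hS]) n12 n13 n23 n1b2 n1b3 n2b1 n2b3 n3b2
  · exact middle_aux v a₁ a₂ a₃ S hv h12 h23 (by simp [hS]) (by simp [hS]) (by simp [hS])
      (by simp [hS]) (by simp [hS]) (by simp [hS]) n12 n13 n23 n1b2 n1b3 n2b1 n2b3 n3b2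
  · exact middle_aux v a₁ a₃ a₂ S hv h13 (by linarith) (by simp [hS]) (by simp [hS])
      (by simp [hS]) (by simp [hS]) (by simp [hS]) (by simp [hS])
      n13 n12 n23.symm n1b3 n1b2 n3b1 n3b2 n2b3
  · exact middle_aux v a₃ a₁ a₂ S hv h13 h12 (by simp [hS]) (by simp [hS]) (by simp [hS])
      (by simp [hS]) (by simp [hS]) (by simp [hS])
      n13.symm n23.symm n12 n3b1 n3b2 n1b3 n1b2 n2b1
  · exact middle_aux v a₂ a₁ a₃ S hv h12 h13 (by simp [hS]) (by simp [hS]) (by simp [hS])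
      (by simp [hS]) (by simp [hS]) (by simp [hS])
      n12.symm n23 n13 n2b1 n2b3 n1b2 n1b3 n3b1
  · exact middle_aux v a₂ a₃ a₁ S hv h23 (by linarith) (by simp [hS]) (by simp [hS])
      (by simp [hS]) (by simp [hS]) (by simp [hS]) (by simp [hS])
      n23 n12.symm n13.symm n2b3 n2b1 n3b2 n3b1 n1b3
  · exact middle_aux v a₃ a₂ a₁ S hv (by linarith) (by linarith) (by simp [hS])
      (by simp [hS]) (by simp [hS]) (by simp [hS]) (by simp [hS]) (by simp [hS])
      n23.symm n13.symm n12.symm n3b2 n3b1 n2b3 n2b1 n1b2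
  · exact middle_aux v a₃ a₂ a₁ S hv h23 h12 (by simp [hS]) (by simp [hS]) (by simp [hS])
      (by simp [hS]) (by simp [hS]) (by simp [hS])
      n23.symm n13.symm n12.symm n3b2 n3b1 n2b3 n2b1 n1b2
end

section
/- Let Γ ⊆ ℝ² be a set such that every line intersects Γ in at most two points and such that for every a ∈ Γ there exists n_a ∈ ℝ² with n_a · (b − a) < 0 for all b ∈ Γ \ {a} (supporting line property). Then for any two distinct vectors v₁, v₂ ∈ ℝ², the intersection (v₁ + Γ) ∩ (v₂ + Γ) consists of at most two points. -/
lemma perp_line (d : EuclideanSpace ℝ (Fin 2)) (hd : d ≠ 0)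
    (u : EuclideanSpace ℝ (Fin 2)) (hu0 : u 0 = -(d 1)) (hu1 : u 1 = d 0)
    (w : EuclideanSpace ℝ (Fin 2))
    (hw : inner ℝ u w = (0 : ℝ)) :
    ∃ l : ℝ, w = l • d := by
  have hin : -(d 1) * w 0 + d 0 * w 1 = 0 := by
    rw [PiLp.inner_apply] at hw
    simpa [Fin.sum_univ_two, RCLike.inner_apply, hu0, hu1, mul_comm] using hw
  by_cases h0 : d 0 = 0
  · have h1 : d 1 ≠ 0 := by
      intro h1
      exact hd (by ext i; fin_cases i <;> simp [h0, h1])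
    have hw0 : w 0 = 0 := by
      have h2 : -(d 1) * w 0 = 0 := by rw [h0] at hin; linarith
      rcases mul_eq_zero.1 h2 with h | h
      · exact absurd (neg_eq_zero.1 h) h1
      · exact h
    refine ⟨w 1 / d 1, ?_⟩
    ext i
    fin_cases i
    · show w 0 = (w 1 / d 1) * d 0
      rw [hw0, h0, mul_zero]
    · show w 1 = (w 1 / d 1) * d 1
      field_simp
  · refine ⟨w 0 / d 0, ?_⟩
    ext i
    fin_cases i
    · show w 0 = (w 0 / d 0) * d 0
      field_simp
    · show w 1 = (w 0 / d 0) * d 1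
      field_simp
      linarith

lemma core_contra (Γ : Set (EuclideanSpace ℝ (Fin 2)))
    (hsupp : ∀ a ∈ Γ, ∃ n : EuclideanSpace ℝ (Fin 2),
      ∀ b ∈ Γ, b ≠ a → inner ℝ n (b - a) < (0 : ℝ))
    (d : EuclideanSpace ℝ (Fin 2)) (hd : d ≠ 0)
    (u : EuclideanSpace ℝ (Fin 2)) (hu0 : u 0 = -(d 1)) (hu1 : u 1 = d 0)
    (a₁ a₂ a₃ : EuclideanSpace ℝ (Fin 2))
    (h₁ : a₁ ∈ Γ ∧ a₁ + d ∈ Γ) (h₂ : a₂ ∈ Γ ∧ a₂ + d ∈ Γ) (h₃ : a₃ ∈ Γ ∧ a₃ + d ∈ Γ)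
    (ht12 : (inner ℝ u a₁ : ℝ) < inner ℝ u a₂) (ht23 : (inner ℝ u a₂ : ℝ) < inner ℝ u a₃) :
    False := by
  obtain ⟨n, hn⟩ := hsupp a₂ h₂.1
  obtain ⟨m, hm⟩ := hsupp (a₂ + d) h₂.2
  have hne12 : a₁ ≠ a₂ := by rintro rfl; exact lt_irrefl _ ht12
  have hne32 : a₃ ≠ a₂ := by rintro rfl; exact lt_irrefl _ ht23
  have hn1 : (inner ℝ n (a₁ - a₂) : ℝ) < 0 := hn a₁ h₁.1 hne12
  have hn3 : (inner ℝ n (a₃ - a₂) : ℝ) < 0 := hn a₃ h₃.1 hne32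
  have hnd : (inner ℝ n d : ℝ) < 0 := by
    have := hn (a₂ + d) h₂.2 (by intro h; exact hd (by simpa using h))
    simpa using this
  have e1 : a₁ + d - (a₂ + d) = a₁ - a₂ := by abel
  have e3 : a₃ + d - (a₂ + d) = a₃ - a₂ := by abel
  have hm1 : (inner ℝ m (a₁ - a₂) : ℝ) < 0 := by
    have := hm (a₁ + d) h₁.2 (by intro h; exact hne12 (by simpa using h))
    rwa [e1] at this
  have hm3 : (inner ℝ m (a₃ - a₂) : ℝ) < 0 := by
    have := hm (a₃ + d) h₃.2 (by intro h; exact hne32 (by simpa using h))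
    rwa [e3] at this
  have hmd : (0 : ℝ) < inner ℝ m d := by
    have := hm a₂ h₂.1 (by intro h; exact hd (by simpa using h.symm))
    have e2 : a₂ - (a₂ + d) = -d := by abel
    rw [e2, inner_neg_right] at this
    linarith
  set t₁ : ℝ := inner ℝ u a₁
  set t₂ : ℝ := inner ℝ u a₂
  set t₃ : ℝ := inner ℝ u a₃
  set w : EuclideanSpace ℝ (Fin 2) := (t₃ - t₂) • (a₁ - a₂) + (t₂ - t₁) • (a₃ - a₂) with hwdef
  have huw : (inner ℝ u w : ℝ) = 0 := by
    rw [hwdef, inner_add_right, real_inner_smul_right, real_inner_smul_right,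
      inner_sub_right, inner_sub_right]
    ring
  obtain ⟨l, hl⟩ := perp_line d hd u hu0 hu1 w huw
  have hnw : (inner ℝ n w : ℝ) < 0 := by
    rw [hwdef, inner_add_right, real_inner_smul_right, real_inner_smul_right]
    nlinarith
  have hmw : (inner ℝ m w : ℝ) < 0 := by
    rw [hwdef, inner_add_right, real_inner_smul_right, real_inner_smul_right]
    nlinarith
  rw [hl, real_inner_smul_right] at hnw hmw
  nlinarith

lemma key_lemma (Γ : Set (EuclideanSpace ℝ (Fin 2)))
    (hline : ∀ p d : EuclideanSpace ℝ (Fin 2), d ≠ 0 →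
      ({x | ∃ t : ℝ, x = p + t • d} ∩ Γ).encard ≤ 2)
    (hsupp : ∀ a ∈ Γ, ∃ n : EuclideanSpace ℝ (Fin 2),
      ∀ b ∈ Γ, b ≠ a → inner ℝ n (b - a) < (0 : ℝ))
    (d : EuclideanSpace ℝ (Fin 2)) (hd : d ≠ 0) :
    {a | a ∈ Γ ∧ a + d ∈ Γ}.encard ≤ 2 := by
  set S := {a | a ∈ Γ ∧ a + d ∈ Γ} with hS
  by_contra hcon
  push_neg at hcon
  -- extract three distinct elements
  obtain ⟨a, b, ha, hb, hab⟩ := Set.one_lt_encard_iff.1 (lt_trans (by norm_num : (1:ℕ∞) < 2) hcon)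
  have hnsub : ¬ S ⊆ {a, b} := by
    intro hsub
    have := (Set.encard_mono hsub).trans_eq (Set.encard_pair hab)
    exact absurd this (not_le.2 hcon)
  obtain ⟨c, hc, hcab⟩ := Set.not_subset.1 hnsub
  simp only [Set.mem_insert_iff, Set.mem_singleton_iff, not_or] at hcab
  obtain ⟨hca, hcb⟩ := hcab
  -- the orthogonal direction
  set u : EuclideanSpace ℝ (Fin 2) := (WithLp.equiv 2 _).symm ![-(d 1), d 0] with hu
  have hu0 : u 0 = -(d 1) := rfl
  have hu1 : u 1 = d 0 := rfl
  -- distinct elements of S have distinct u-inner-products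
  have hdist : ∀ x ∈ S, ∀ y ∈ S, x ≠ y → (inner ℝ u x : ℝ) ≠ inner ℝ u y := by
    intro x hx y hy hxy heq
    have hperp : (inner ℝ u (y - x) : ℝ) = 0 := by rw [inner_sub_right]; linarith
    obtain ⟨l, hl⟩ := perp_line d hd u hu0 hu1 _ hperp
    have hl0 : l ≠ 0 := by
      rintro rfl
      rw [zero_smul] at hl
      exact hxy (sub_eq_zero.1 hl).symm
    have hy' : y = x + l • d := by rw [← hl]; abel
    have hxline : x ∈ {z | ∃ t : ℝ, z = x + t • d} ∩ Γ := ⟨⟨0, by simp⟩, hx.1⟩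
    have hxdline : x + d ∈ {z | ∃ t : ℝ, z = x + t • d} ∩ Γ := ⟨⟨1, by simp⟩, hx.2⟩
    have hxd_ne : x ≠ x + d := fun h => hd (by simpa using h.symm)
    by_cases hyd : y = x + d
    · have hydline : y + d ∈ {z | ∃ t : ℝ, z = x + t • d} ∩ Γ :=
        ⟨⟨l + 1, by rw [hy', add_smul, one_smul]; abel⟩, hy.2⟩
      have h2d : (2:ℝ) • d ≠ 0 := smul_ne_zero (by norm_num) hd
      have hne1 : x ≠ y + d := by
        intro h
        apply h2d
        rw [two_smul]
        have : y + d - x = 0 := by rw [← h]; abel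
        rw [hyd] at this
        rw [← this]; abel
      have hne2 : x + d ≠ y + d := fun h => hxy (add_right_cancel h)
      have hsub3 : ({x, x + d, y + d} : Set _) ⊆ {z | ∃ t : ℝ, z = x + t • d} ∩ Γ := by
        rintro z (rfl | rfl | rfl)
        exacts [hxline, hxdline, hydline]
      have h3 : ({x, x + d, y + d} : Set _).encard = 3 :=
        Set.encard_eq_three.2 ⟨x, x + d, y + d, hxd_ne, hne1, hne2, rfl⟩
      have := (h3 ▸ Set.encard_mono hsub3).trans (hline x d hd)
      norm_num at this
    · have hyline : y ∈ {z | ∃ t : ℝ, z = x + t • d} ∩ Γ := ⟨⟨l, hy'⟩, hy.1⟩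
      have hsub3 : ({x, x + d, y} : Set _) ⊆ {z | ∃ t : ℝ, z = x + t • d} ∩ Γ := by
        rintro z (rfl | rfl | rfl)
        exacts [hxline, hxdline, hyline]
      have h3 : ({x, x + d, y} : Set _).encard = 3 :=
        Set.encard_eq_three.2 ⟨x, x + d, y, hxd_ne, hxy, fun h => hyd h.symm, rfl⟩
      have := (h3 ▸ Set.encard_mono hsub3).trans (hline x d hd)
      norm_num at this
  -- case analysis on the ordering of inner products
  have hab' := hdist a ha b hb hab
  have hac' := hdist a ha c hc (Ne.symm hca)
  have hbc' := hdist b hb c hc (Ne.symm hcb)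
  rcases lt_or_gt_of_ne hab' with h1 | h1 <;>
    rcases lt_or_gt_of_ne hac' with h2 | h2 <;>
      rcases lt_or_gt_of_ne hbc' with h3 | h3
  · exact core_contra Γ hsupp d hd u hu0 hu1 a b c ha hb hc h1 h3
  · exact core_contra Γ hsupp d hd u hu0 hu1 a c b ha hc hb h2 h3
  · exact core_contra Γ hsupp d hd u hu0 hu1 c a b hc ha hb h2 h1
  · exact core_contra Γ hsupp d hd u hu0 hu1 c a b hc ha hb h2 h1
  · exact core_contra Γ hsupp d hd u hu0 hu1 b a c hb ha hc h1 h2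
  · exact core_contra Γ hsupp d hd u hu0 hu1 b a c hb ha hc h1 h2
  · exact core_contra Γ hsupp d hd u hu0 hu1 b c a hb hc ha h3 h2
  · exact core_contra Γ hsupp d hd u hu0 hu1 c b a hc hb ha h3 h1

theorem translates_intersect_in_at_most_two_points
    (Γ : Set (EuclideanSpace ℝ (Fin 2)))
    (hline : ∀ p d : EuclideanSpace ℝ (Fin 2), d ≠ 0 →
      ({x | ∃ t : ℝ, x = p + t • d} ∩ Γ).encard ≤ 2)
    (hsupp : ∀ a ∈ Γ, ∃ n : EuclideanSpace ℝ (Fin 2),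
      ∀ b ∈ Γ, b ≠ a → inner ℝ n (b - a) < (0 : ℝ))
    (v₁ v₂ : EuclideanSpace ℝ (Fin 2)) (hv : v₁ ≠ v₂) :
    (((v₁ + ·) '' Γ) ∩ ((v₂ + ·) '' Γ)).encard ≤ 2 := by
  set d := v₁ - v₂ with hd'
  have hd : d ≠ 0 := sub_ne_zero.2 hv
  have himg : ((v₁ + ·) '' Γ) ∩ ((v₂ + ·) '' Γ) = (v₁ + ·) '' {a | a ∈ Γ ∧ a + d ∈ Γ} := by
    ext x
    constructor
    · rintro ⟨⟨a, ha, rfl⟩, ⟨b, hb, hab⟩⟩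
      refine ⟨a, ⟨ha, ?_⟩, rfl⟩
      have : b = a + d := by
        have : v₂ + b = v₁ + a := hab
        rw [hd']
        rw [← sub_eq_zero] at this ⊢
        rw [← this]; abel
      rwa [← this]
    · rintro ⟨a, ⟨ha, had⟩, rfl⟩
      refine ⟨⟨a, ha, rfl⟩, ⟨a + d, had, ?_⟩⟩
      show v₂ + (a + d) = v₁ + a
      rw [hd']; abel
  rw [himg]
  rw [Set.InjOn.encard_image (fun x _ y _ h => by simpa using h)]
  exact key_lemma Γ hline hsupp d hd
end

section
/- Let A ⊆ ℝ² be measurable, let n ∈ ℕ, and let (f_r)_{r ∈ {0,1}^n} be functions each equal to either 𝟙_A or 𝟙_{ℝ²}, with at least one equal to 𝟙_A. Then the joint upper Banach density satisfies δ̄((f_r)_r) ≤ C_n · δ̄(A)^{(n+1)/2^n}, where δ̄(A) is the upper Banach density of A. -/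
open MeasureTheory

/-- The axis-parallel square `z + [0,R]²`. -/
def cube (z : EuclideanSpace ℝ (Fin 2)) (R : ℝ) : Set (EuclideanSpace ℝ (Fin 2)) :=
  {x | ∀ i, x i ∈ Set.Icc (z i) (z i + R)}

/-- Upper Banach density of a planar set. -/
noncomputable def banachDensity (A : Set (EuclideanSpace ℝ (Fin 2))) : ℝ :=
  Filter.limsup
    (fun R : ℝ => ⨆ z : EuclideanSpace ℝ (Fin 2),
      (volume (A ∩ cube z R)).toReal / R ^ 2) Filter.atTop

/-- The normalized hypercubic average appearing in the joint upper Banach density. -/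
noncomputable def jointAvg (n : ℕ)
    (f : (Fin n → Bool) → EuclideanSpace ℝ (Fin 2) → ℝ)
    (z : EuclideanSpace ℝ (Fin 2)) (R r : ℝ) : ℝ :=
  (2 * r) ^ (-(2 * (n : ℝ))) * R ^ (-2 : ℝ) *
    ∫ x in cube z R, ∫ v in {v : Fin n → EuclideanSpace ℝ (Fin 2) |
        ∀ i j, |v i j| ≤ r},
      ∏ s : Fin n → Bool, f s (x + ∑ i, if s i then v i else 0)

/-- The joint upper Banach density of a family of functions. -/
noncomputable def jointDensity (n : ℕ)
    (f : (Fin n → Bool) → EuclideanSpace ℝ (Fin 2) → ℝ) : ℝ :=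
  ⨆ (M : ℝ) (_ : 1 ≤ M),
    Filter.limsup
      (fun R : ℝ => ⨆ z : EuclideanSpace ℝ (Fin 2),
        ⨅ r : {r : ℝ // M ≤ r ∧ r ≤ R / 2 ^ n}, jointAvg n f z R r)
      Filter.atTop

-- auxiliary development

local notation "Pl" => EuclideanSpace ℝ (Fin 2)

lemma cube_eq (z : Pl) (R : ℝ) :
    cube z R = (MeasurableEquiv.toLp 2 (Fin 2 → ℝ)).symm ⁻¹'
      (Set.univ.pi fun i => Set.Icc (z i) (z i + R)) := by
  ext x
  simp [cube, Set.mem_pi, MeasurableEquiv.toLp_symm_apply, Pi.le_def,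
    Set.mem_Icc, forall_and]

lemma volume_cube (z : Pl) {R : ℝ} (hR : 0 ≤ R) :
    volume (cube z R) = ENNReal.ofReal R ^ 2 := by
  rw [cube_eq, (EuclideanSpace.volume_preserving_symm_measurableEquiv_toLp (Fin 2)).measure_preimage
    (MeasurableSet.univ_pi fun i => measurableSet_Icc).nullMeasurableSet]
  rw [volume_pi_pi]
  simp [Real.volume_Icc]

lemma measurableSet_cube (z : Pl) (R : ℝ) :
    MeasurableSet (cube z R) := by
  rw [cube_eq]
  exact (MeasurableEquiv.toLp 2 (Fin 2 → ℝ)).symm.measurable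
    (MeasurableSet.univ_pi fun i => measurableSet_Icc)

def kube (r : ℝ) : Set Pl := {u | ∀ j, |u j| ≤ r}

def box (n : ℕ) (r : ℝ) : Set (Fin n → Pl) := {v | ∀ i j, |v i j| ≤ r}

lemma kube_eq (r : ℝ) :
    kube r = (MeasurableEquiv.toLp 2 (Fin 2 → ℝ)).symm ⁻¹'
      (Set.univ.pi fun _ => Set.Icc (-r) r) := by
  ext u
  simp [kube, Set.mem_pi, MeasurableEquiv.toLp_symm_apply,
    Set.mem_Icc, abs_le, Pi.le_def, forall_and]

lemma measurableSet_kube (r : ℝ) : MeasurableSet (kube r) := by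
  rw [kube_eq]
  exact (MeasurableEquiv.toLp 2 (Fin 2 → ℝ)).symm.measurable
    (MeasurableSet.univ_pi fun _ => measurableSet_Icc)

lemma volume_kube {r : ℝ} : volume (kube r) = ENNReal.ofReal (2 * r) ^ 2 := by
  rw [kube_eq, (EuclideanSpace.volume_preserving_symm_measurableEquiv_toLp (Fin 2)).measure_preimage
    (MeasurableSet.univ_pi fun _ => measurableSet_Icc).nullMeasurableSet, volume_pi_pi]
  simp [Real.volume_Icc]
  ring_nf
  rw [ENNReal.ofReal_mul' zero_le_two, mul_pow]
  norm_num

lemma box_eq (n : ℕ) (r : ℝ) : box n r = Set.univ.pi fun _ : Fin n => kube r := by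
  ext v; simp [box, kube, Set.mem_pi]

lemma measurableSet_box (n : ℕ) (r : ℝ) : MeasurableSet (box n r) := by
  rw [box_eq]; exact MeasurableSet.univ_pi fun _ => measurableSet_kube r

lemma volume_box (n : ℕ) {r : ℝ} :
    volume (box n r) = ENNReal.ofReal (2 * r) ^ (2 * n) := by
  rw [box_eq, volume_pi_pi]
  simp [volume_kube, Finset.prod_const, ← pow_mul, mul_comm]

lemma vol_inter_cube_le (A : Set Pl) {R : ℝ} (hR : 0 ≤ R) (z : Pl) :
    (volume (A ∩ cube z R)).toReal ≤ R ^ 2 := by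
  have h1 : volume (A ∩ cube z R) ≤ ENNReal.ofReal R ^ 2 := by
    rw [← volume_cube z hR]
    exact measure_mono Set.inter_subset_right
  calc (volume (A ∩ cube z R)).toReal ≤ (ENNReal.ofReal R ^ 2).toReal :=
        ENNReal.toReal_mono (by simp [ENNReal.pow_ne_top, ENNReal.ofReal_ne_top]) h1
    _ = R ^ 2 := by rw [ENNReal.toReal_pow, ENNReal.toReal_ofReal hR]

lemma jointAvg_nonneg {n : ℕ} {f : (Fin n → Bool) → Pl → ℝ}
    (hf0 : ∀ s x, 0 ≤ f s x) (z : Pl) {R r : ℝ} (hR : 0 < R) (hr : 0 < r) :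
    0 ≤ jointAvg n f z R r := by
  unfold jointAvg
  have h1 : (0:ℝ) ≤ (2 * r) ^ (-(2 * (n : ℝ))) * R ^ (-2 : ℝ) := by positivity
  refine mul_nonneg h1 ?_
  refine integral_nonneg fun x => ?_
  exact integral_nonneg fun v => Finset.prod_nonneg fun s _ => hf0 s _

lemma jointAvg_le {n : ℕ} {A : Set Pl} (hA : MeasurableSet A)
    {f : (Fin n → Bool) → Pl → ℝ}
    (hf : ∀ s, f s = A.indicator 1 ∨ f s = fun _ => 1)
    {s₀ : Fin n → Bool} (hs₀ : f s₀ = A.indicator 1)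
    (z : Pl) {R r : ℝ} (hR : 0 < R) (hr : 0 < r) :
    jointAvg n f z R r ≤ ⨆ z' : Pl, (volume (A ∩ cube z' R)).toReal / R ^ 2 := by
  have hf01 : ∀ s x, 0 ≤ f s x ∧ f s x ≤ 1 := by
    intro s x
    rcases hf s with h | h <;> rw [h]
    · by_cases hx : x ∈ A <;> simp [Set.indicator_apply, hx]
    · simp
  have hfmeas : ∀ s, Measurable (f s) := by
    intro s
    rcases hf s with h | h <;> rw [h]
    · exact measurable_one.indicator hA
    · exact measurable_const
  set B := ⨆ z' : Pl, (volume (A ∩ cube z' R)).toReal / R ^ 2 with hBdef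
  have hBdd : BddAbove (Set.range fun z' : Pl => (volume (A ∩ cube z' R)).toReal / R ^ 2) := by
    refine ⟨1, ?_⟩
    rintro _ ⟨z', rfl⟩
    exact div_le_one_of_le₀ (vol_inter_cube_le A hR.le z') (sq_nonneg R)
  have hBle : ∀ z' : Pl, (volume (A ∩ cube z' R)).toReal ≤ R ^ 2 * B := by
    intro z'
    have h := le_ciSup hBdd z'
    have h2 : (volume (A ∩ cube z' R)).toReal
        = R ^ 2 * ((volume (A ∩ cube z' R)).toReal / R ^ 2) := by
      field_simp
    rw [h2]
    exact mul_le_mul_of_nonneg_left h (sq_nonneg R)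
  set μc := volume.restrict (cube z R) with hμc
  set μb := volume.restrict (box n r) with hμb
  haveI : IsFiniteMeasure μc := by
    refine ⟨?_⟩
    rw [hμc, Measure.restrict_apply_univ, volume_cube z hR.le]
    exact ENNReal.pow_lt_top ENNReal.ofReal_lt_top
  haveI : IsFiniteMeasure μb := by
    refine ⟨?_⟩
    rw [hμb, Measure.restrict_apply_univ, volume_box n]
    exact ENNReal.pow_lt_top ENNReal.ofReal_lt_top
  set w : (Fin n → Pl) → Pl := fun v => ∑ i, if s₀ i then v i else 0 with hw
  set P : Pl × (Fin n → Pl) → ℝ :=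
    fun p => ∏ s : Fin n → Bool, f s (p.1 + ∑ i, if s i then p.2 i else 0) with hP
  set Q : Pl × (Fin n → Pl) → ℝ := fun p => A.indicator 1 (p.1 + w p.2) with hQ
  have hccont : ∀ s : Fin n → Bool, Continuous fun p : Pl × (Fin n → Pl) =>
      p.1 + ∑ i, if s i then p.2 i else 0 := by
    intro s
    refine continuous_fst.add (continuous_finset_sum _ fun i _ => ?_)
    by_cases h : s i
    · simpa [h] using (by fun_prop :
        Continuous fun p : Pl × (Fin n → Pl) => p.2 i)
    · simpa [h] using continuous_const
  have hPmeas : Measurable P := by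
    rw [hP]
    exact Finset.measurable_prod _ fun s _ => (hfmeas s).comp (hccont s).measurable
  have hQmeas : Measurable Q := by
    rw [hQ]
    exact (measurable_one.indicator hA).comp (hccont s₀).measurable
  have hP0 : ∀ p, 0 ≤ P p := fun p => Finset.prod_nonneg fun s _ => (hf01 s _).1
  have hP1 : ∀ p, P p ≤ 1 := fun p =>
    Finset.prod_le_one (fun s _ => (hf01 s _).1) (fun s _ => (hf01 s _).2)
  have hind01 : ∀ x : Pl, 0 ≤ A.indicator (1 : Pl → ℝ) x ∧ A.indicator (1 : Pl → ℝ) x ≤ 1 := by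
    intro x
    have h := hf01 s₀ x
    rwa [hs₀] at h
  have hQ0 : ∀ p, 0 ≤ Q p := fun p => (hind01 _).1
  have hQ1 : ∀ p, Q p ≤ 1 := fun p => (hind01 _).2
  have hPQ : ∀ p, P p ≤ Q p := by
    intro p
    have h1 : P p = f s₀ (p.1 + ∑ i, if s₀ i then p.2 i else 0) *
        ∏ s ∈ Finset.univ.erase s₀, f s (p.1 + ∑ i, if s i then p.2 i else 0) := by
      rw [hP]
      exact (Finset.mul_prod_erase Finset.univ _ (Finset.mem_univ s₀)).symm
    rw [h1]
    calc f s₀ (p.1 + ∑ i, if s₀ i then p.2 i else 0) *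
          ∏ s ∈ Finset.univ.erase s₀, f s (p.1 + ∑ i, if s i then p.2 i else 0)
        ≤ f s₀ (p.1 + ∑ i, if s₀ i then p.2 i else 0) * 1 := by
          refine mul_le_mul_of_nonneg_left ?_ (hf01 s₀ _).1
          exact Finset.prod_le_one (fun s _ => (hf01 s _).1) (fun s _ => (hf01 s _).2)
      _ = Q p := by rw [mul_one, hs₀, hQ]
  have hPint : Integrable P (μc.prod μb) := by
    refine (integrable_const (1:ℝ)).mono' hPmeas.aestronglyMeasurable ?_
    refine Filter.Eventually.of_forall fun p => ?_
    rw [Real.norm_eq_abs, abs_of_nonneg (hP0 p)]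
    exact hP1 p
  have hQint : Integrable Q (μc.prod μb) := by
    refine (integrable_const (1:ℝ)).mono' hQmeas.aestronglyMeasurable ?_
    refine Filter.Eventually.of_forall fun p => ?_
    rw [Real.norm_eq_abs, abs_of_nonneg (hQ0 p)]
    exact hQ1 p
  have hxint : ∀ v : Fin n → Pl,
      (∫ x, Q (x, v) ∂μc) = (volume (A ∩ cube (z + w v) R)).toReal := by
    intro v
    have hmeasadd : Measurable fun x : Pl => x + w v := measurable_add_const (w v)
    have e1 : (fun x : Pl => Q (x, v)) = Set.indicator ((fun x : Pl => x + w v) ⁻¹' A) 1 := by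
      funext x
      by_cases hx : x + w v ∈ A <;>
        simp [hQ, Set.indicator_apply, Set.mem_preimage, hx]
    have e2 : ((fun x : Pl => x + w v) ⁻¹' A) ∩ cube z R =
        (fun x : Pl => x + w v) ⁻¹' (A ∩ cube (z + w v) R) := by
      ext x
      simp only [Set.mem_inter_iff, Set.mem_preimage, cube, Set.mem_setOf_eq, Set.mem_Icc,
        PiLp.add_apply]
      constructor
      · rintro ⟨h1, h2⟩
        exact ⟨h1, fun i => ⟨by linarith [(h2 i).1], by linarith [(h2 i).2]⟩⟩
      · rintro ⟨h1, h2⟩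
        exact ⟨h1, fun i => ⟨by linarith [(h2 i).1], by linarith [(h2 i).2]⟩⟩
    rw [e1, integral_indicator_one (hmeasadd hA), hμc, measureReal_restrict_apply (hmeasadd hA), e2,
      measureReal_def, measure_preimage_add_right]
  have main1 : (∫ x, (∫ v, P (x, v) ∂μb) ∂μc) ≤ ∫ x, (∫ v, Q (x, v) ∂μb) ∂μc := by
    refine integral_mono_ae hPint.integral_prod_left hQint.integral_prod_left ?_
    filter_upwards [hPint.prod_right_ae, hQint.prod_right_ae] with x h1 h2
    exact integral_mono h1 h2 fun v => hPQ (x, v)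
  have main2 : (∫ x, (∫ v, Q (x, v) ∂μb) ∂μc) = ∫ v, (∫ x, Q (x, v) ∂μc) ∂μb :=
    integral_integral_swap (f := fun x v => Q (x, v)) hQint
  have main3 : (∫ v, (∫ x, Q (x, v) ∂μc) ∂μb) ≤ (volume (box n r)).toReal * (R ^ 2 * B) := by
    calc (∫ v, (∫ x, Q (x, v) ∂μc) ∂μb) ≤ ∫ _v, R ^ 2 * B ∂μb := by
          refine integral_mono hQint.integral_prod_right (integrable_const _) fun v => ?_
          rw [hxint v]
          exact hBle _
      _ = (μb Set.univ).toReal * (R ^ 2 * B) := by rw [integral_const, smul_eq_mul, measureReal_def]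
      _ = (volume (box n r)).toReal * (R ^ 2 * B) := by rw [hμb, Measure.restrict_apply_univ]
  have hIbound : (∫ x, (∫ v, P (x, v) ∂μb) ∂μc) ≤ (volume (box n r)).toReal * (R ^ 2 * B) := by
    refine main1.trans ?_
    rw [main2]
    exact main3
  have hIeq : jointAvg n f z R r
      = (2 * r) ^ (-(2 * (n : ℝ))) * R ^ (-2 : ℝ) * ∫ x, (∫ v, P (x, v) ∂μb) ∂μc := by
    simp only [jointAvg, hP, hμc, hμb, box]
  rw [hIeq]
  have hboxtr : (volume (box n r)).toReal = (2 * r) ^ (2 * n) := by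
    rw [volume_box n, ENNReal.toReal_pow, ENNReal.toReal_ofReal (by linarith)]
  have hc0 : (0:ℝ) ≤ (2 * r) ^ (-(2 * (n : ℝ))) * R ^ (-2 : ℝ) := by positivity
  calc (2 * r) ^ (-(2 * (n : ℝ))) * R ^ (-2 : ℝ) * ∫ x, (∫ v, P (x, v) ∂μb) ∂μc
      ≤ (2 * r) ^ (-(2 * (n : ℝ))) * R ^ (-2 : ℝ)
          * ((volume (box n r)).toReal * (R ^ 2 * B)) :=
        mul_le_mul_of_nonneg_left hIbound hc0
    _ = B := by
        rw [hboxtr]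
        have h2r : (0:ℝ) < 2 * r := by linarith
        have ec : ((2 * n : ℕ) : ℝ) = 2 * (n : ℝ) := by push_cast; ring
        have e3 : (2 * r : ℝ) ^ (-(2 * (n : ℝ))) = ((2 * r) ^ (2 * n : ℕ))⁻¹ := by
          rw [← ec, ← Real.rpow_natCast (2 * r) (2 * n), ← Real.rpow_neg h2r.le]
        have e4 : (R : ℝ) ^ (-2 : ℝ) = (R ^ (2 : ℕ))⁻¹ := by
          rw [show (-2 : ℝ) = -((2:ℕ):ℝ) by norm_num, ← Real.rpow_natCast R 2,
            ← Real.rpow_neg hR.le]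
        rw [e3, e4]
        have ha : ((2 * r : ℝ) ^ (2 * n : ℕ)) ≠ 0 := pow_ne_zero _ (ne_of_gt h2r)
        have hb : (R : ℝ) ^ (2:ℕ) ≠ 0 := pow_ne_zero _ (ne_of_gt hR)
        field_simp

lemma banachDensity_nonneg (A : Set Pl) : 0 ≤ banachDensity A := by
  have hB0 : ∀ R : ℝ, 0 ≤ ⨆ z : Pl, (volume (A ∩ cube z R)).toReal / R ^ 2 := fun R =>
    Real.iSup_nonneg fun z => div_nonneg ENNReal.toReal_nonneg (sq_nonneg R)
  have hbdd : Filter.IsBoundedUnder (· ≤ ·) Filter.atTop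
      (fun R : ℝ => ⨆ z : Pl, (volume (A ∩ cube z R)).toReal / R ^ 2) := by
    refine Filter.isBoundedUnder_of_eventually_le (a := 1) ?_
    filter_upwards [Filter.eventually_ge_atTop (1:ℝ)] with R hR1
    exact Real.iSup_le
      (fun z => div_le_one_of_le₀ (vol_inter_cube_le A (by linarith) z) (sq_nonneg R)) zero_le_one
  exact Filter.le_limsup_of_frequently_le
    ((Filter.Eventually.of_forall hB0).frequently) hbdd

lemma banachDensity_le_one (A : Set Pl) : banachDensity A ≤ 1 := by
  refine Filter.limsup_le_of_le ?_ ?_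
  · refine Filter.IsBoundedUnder.isCoboundedUnder_le ⟨0, ?_⟩
    rw [Filter.eventually_map]
    exact Filter.Eventually.of_forall fun R =>
      Real.iSup_nonneg fun z => div_nonneg ENNReal.toReal_nonneg (sq_nonneg R)
  · filter_upwards [Filter.eventually_ge_atTop (1:ℝ)] with R hR1
    exact Real.iSup_le
      (fun z => div_le_one_of_le₀ (vol_inter_cube_le A (by linarith) z) (sq_nonneg R)) zero_le_one

lemma jointDensity_le_banachDensity {n : ℕ} {A : Set Pl} (hA : MeasurableSet A)
    {f : (Fin n → Bool) → Pl → ℝ}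
    (hf : ∀ s, f s = A.indicator 1 ∨ f s = fun _ => 1)
    {s₀ : Fin n → Bool} (hs₀ : f s₀ = A.indicator 1) :
    jointDensity n f ≤ banachDensity A := by
  have hf0 : ∀ s x, 0 ≤ f s x := by
    intro s x
    rcases hf s with h | h <;> rw [h]
    · exact Set.indicator_nonneg (fun _ _ => zero_le_one) x
    · exact zero_le_one
  have hδ0 : 0 ≤ banachDensity A := banachDensity_nonneg A
  refine Real.iSup_le (fun M => Real.iSup_le (fun hM => ?_) hδ0) hδ0
  have hMpos : (0:ℝ) < M := lt_of_lt_of_le one_pos hM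
  unfold banachDensity
  refine Filter.limsup_le_limsup ?_ ?_ ?_
  · -- eventual pointwise inequality
    filter_upwards [Filter.eventually_ge_atTop (max 1 (2 ^ n * M))] with R hR
    have hR1 : (1:ℝ) ≤ R := le_trans (le_max_left _ _) hR
    have hRM : 2 ^ n * M ≤ R := le_trans (le_max_right _ _) hR
    have hRpos : (0:ℝ) < R := lt_of_lt_of_le one_pos hR1
    have hMle : M ≤ R / 2 ^ n := by
      rw [le_div_iff₀ (by positivity)]
      calc M * 2 ^ n = 2 ^ n * M := by ring
        _ ≤ R := hRM
    refine Real.iSup_le (fun z => ?_)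
      (Real.iSup_nonneg fun z => div_nonneg ENNReal.toReal_nonneg (sq_nonneg R))
    have hbb : BddBelow (Set.range fun r : {r : ℝ // M ≤ r ∧ r ≤ R / 2 ^ n} =>
        jointAvg n f z R (r : ℝ)) := by
      refine ⟨0, ?_⟩
      rintro _ ⟨⟨r, hr1, hr2⟩, rfl⟩
      exact jointAvg_nonneg hf0 z hRpos (lt_of_lt_of_le hMpos hr1)
    refine le_trans (ciInf_le hbb ⟨M, le_refl M, hMle⟩) ?_
    exact jointAvg_le hA hf hs₀ z hRpos hMpos
  · -- coboundedness
    refine Filter.IsBoundedUnder.isCoboundedUnder_le ⟨0, ?_⟩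
    rw [Filter.eventually_map]
    filter_upwards [Filter.eventually_ge_atTop (1:ℝ)] with R hR1
    refine Real.iSup_nonneg fun z => ?_
    refine Real.iInf_nonneg fun r => ?_
    exact jointAvg_nonneg hf0 z (lt_of_lt_of_le one_pos hR1)
      (lt_of_lt_of_le (lt_of_lt_of_le one_pos hM) r.2.1)
  · -- boundedness of the majorant
    refine Filter.isBoundedUnder_of_eventually_le (a := 1) ?_
    filter_upwards [Filter.eventually_ge_atTop (1:ℝ)] with R hR1
    exact Real.iSup_le
      (fun z => div_le_one_of_le₀ (vol_inter_cube_le A (by linarith) z) (sq_nonneg R)) zero_le_one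

theorem jointDensity_upper_bound (n : ℕ) :
    ∃ C : ℝ, 0 < C ∧
      ∀ A : Set (EuclideanSpace ℝ (Fin 2)), MeasurableSet A →
        ∀ f : (Fin n → Bool) → EuclideanSpace ℝ (Fin 2) → ℝ,
          (∀ s, f s = A.indicator 1 ∨ f s = fun _ => 1) →
          (∃ s, f s = A.indicator 1) →
          jointDensity n f ≤ C * banachDensity A ^ ((n + 1 : ℝ) / 2 ^ n) := by
  refine ⟨1, one_pos, fun A hA f hf hex => ?_⟩
  obtain ⟨s₀, hs₀⟩ := hex
  have h1 : jointDensity n f ≤ banachDensity A :=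
    jointDensity_le_banachDensity hA hf hs₀
  have hδ0 : 0 ≤ banachDensity A := banachDensity_nonneg A
  have hδ1 : banachDensity A ≤ 1 := banachDensity_le_one A
  have hepos : (0:ℝ) < (n + 1 : ℝ) / 2 ^ n := by positivity
  have hele : ((n : ℝ) + 1) / 2 ^ n ≤ 1 := by
    rw [div_le_one (by positivity)]
    have := Nat.lt_two_pow_self (n := n)
    have h2 : ((n:ℝ) + 1) ≤ ((2:ℝ)) ^ n := by exact_mod_cast Nat.succ_le_of_lt this
    simpa using h2
  rw [one_mul]
  rcases eq_or_lt_of_le hδ0 with h | h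
  · rw [← h, Real.zero_rpow (ne_of_gt hepos)]
    rw [← h] at h1
    exact h1
  · refine h1.trans ?_
    calc banachDensity A = banachDensity A ^ (1:ℝ) := (Real.rpow_one _).symm
      _ ≤ banachDensity A ^ ((n + 1 : ℝ) / 2 ^ n) :=
        Real.rpow_le_rpow_of_exponent_ge h hδ1 hele
end

section
/- Let E ⊆ ℝ² and t > 0, and consider the family T_t(E) = {S_t(e) ∩ E : e ∈ E} where S_t(e) = {y ∈ ℝ² : |e − y| = t}. Then for E = ℝ², the Vapnik–Chervonenkis dimension of T_t(ℝ²) equals 3, i.e., there is a 3-element subset of ℝ² shattered by the family of circles of radius t, and no 4-element subset of ℝ² is shattered by it. -/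
/-- A family of subsets `𝒯` shatters a set `C` if every subset of `C` is
cut out by a member of the family. -/
def Shatters {X : Type*} (𝒯 : Set (Set X)) (C : Set X) : Prop :=
  ∀ D ⊆ C, ∃ T ∈ 𝒯, T ∩ C = D

section Aux

def pt (x y : ℝ) : EuclideanSpace ℝ (Fin 2) := WithLp.toLp 2 ![x, y]

lemma pt_inj {x y u v : ℝ} (h : pt x y = pt u v) : x = u ∧ y = v := by
  have h' : (![x,y] : Fin 2 → ℝ) = ![u,v] := congrArg WithLp.ofLp h
  exact ⟨congrFun h' 0, congrFun h' 1⟩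

lemma mem_sphere_iff2 {t : ℝ} (ht : 0 ≤ t) (x e : EuclideanSpace ℝ (Fin 2)) :
    x ∈ Metric.sphere e t ↔ (x 0 - e 0)^2 + (x 1 - e 1)^2 = t^2 := by
  rw [Metric.mem_sphere, EuclideanSpace.dist_eq, Fin.sum_univ_two,
    Real.dist_eq, Real.dist_eq, sq_abs, sq_abs]
  conv_lhs => rw [show t = Real.sqrt (t^2) from (Real.sqrt_sq ht).symm]
  exact Real.sqrt_inj (by positivity) (by positivity)

lemma pt_sphere {t : ℝ} (ht : 0 ≤ t) (x y u v : ℝ) :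
    pt x y ∈ Metric.sphere (pt u v) t ↔ (x-u)^2+(y-v)^2 = t^2 :=
  mem_sphere_iff2 ht (pt x y) (pt u v)

lemma ext2 {x y : EuclideanSpace ℝ (Fin 2)} (h0 : x 0 = y 0) (h1 : x 1 = y 1) : x = y :=
  WithLp.ofLp_injective 2 (funext fun i => by fin_cases i <;> assumption)

lemma inter_eq_of {X : Type*} {T C D : Set X} (hD : D ⊆ C)
    (h : ∀ x ∈ C, (x ∈ T ↔ x ∈ D)) : T ∩ C = D := by
  ext x
  constructor
  · rintro ⟨hT, hC⟩; exact (h x hC).mp hT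
  · intro hx; exact ⟨(h x (hD hx)).mpr hx, hD hx⟩

lemma quad_three_roots {A B C r s u : ℝ} (hA : A ≠ 0)
    (hr : A*r^2 + B*r + C = 0) (hs : A*s^2 + B*s + C = 0) (hu : A*u^2 + B*u + C = 0)
    (hrs : r ≠ s) (hru : r ≠ u) (hsu : s ≠ u) : False := by
  have h1 : A*(r+s) + B = 0 := by
    have e1 : (r - s) * (A*(r+s)+B) = 0 := by linear_combination hr - hs
    rcases mul_eq_zero.mp e1 with h | h
    · exact absurd (sub_eq_zero.mp h) hrs
    · exact h
  have h2 : A*(r+u) + B = 0 := by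
    have e1 : (r - u) * (A*(r+u)+B) = 0 := by linear_combination hr - hu
    rcases mul_eq_zero.mp e1 with h | h
    · exact absurd (sub_eq_zero.mp h) hru
    · exact h
  have h3 : A * (s - u) = 0 := by linear_combination h1 - h2
  rcases mul_eq_zero.mp h3 with h | h
  · exact hA h
  · exact hsu (sub_eq_zero.mp h)

lemma line_circle {w0 w1 m e0 e1 t a0 a1 b0 b1 c0 c1 : ℝ} (hw : w1 ≠ 0)
    (la : w0*a0 + w1*a1 = m) (lb : w0*b0 + w1*b1 = m) (lc : w0*c0 + w1*c1 = m)
    (ca : (a0-e0)^2 + (a1-e1)^2 = t^2) (cb : (b0-e0)^2 + (b1-e1)^2 = t^2)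
    (cc : (c0-e0)^2 + (c1-e1)^2 = t^2)
    (hab : a0 ≠ b0 ∨ a1 ≠ b1) (hac : a0 ≠ c0 ∨ a1 ≠ c1) (hbc : b0 ≠ c0 ∨ b1 ≠ c1) : False := by
  have key : ∀ x0 x1 y0 y1 : ℝ, w0*x0 + w1*x1 = m → w0*y0 + w1*y1 = m →
      (x0 ≠ y0 ∨ x1 ≠ y1) → x0 ≠ y0 := by
    intro x0 x1 y0 y1 hx hy hxy h0
    subst h0
    have : w1 * x1 = w1 * y1 := by linarith
    have h1 : x1 = y1 := mul_left_cancel₀ hw this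
    rcases hxy with h | h
    · exact h rfl
    · exact h h1
  have hab0 : a0 ≠ b0 := key _ _ _ _ la lb hab
  have hac0 : a0 ≠ c0 := key _ _ _ _ la lc hac
  have hbc0 : b0 ≠ c0 := key _ _ _ _ lb lc hbc
  have hA : w0^2 + w1^2 ≠ 0 := by positivity
  have q : ∀ x0 x1 : ℝ, w0*x0 + w1*x1 = m → (x0-e0)^2 + (x1-e1)^2 = t^2 →
      (w0^2+w1^2)*x0^2 + (-2*w1^2*e0 - 2*w0*(m - w1*e1))*x0 +
        (w1^2*e0^2 + (m-w1*e1)^2 - w1^2*t^2) = 0 := by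
    intro x0 x1 hx cx
    linear_combination w1^2 * cx - (m - w0*x0 + w1*x1 - 2*w1*e1) * hx
  exact quad_three_roots hA (q _ _ la ca) (q _ _ lb cb) (q _ _ lc cc) hab0 hac0 hbc0

/-- Three distinct points cannot lie on two distinct spheres of radius `t` in the plane. -/
lemma two_spheres {t : ℝ} {e f a b c : EuclideanSpace ℝ (Fin 2)} (hef : e ≠ f)
    (hab : a ≠ b) (hac : a ≠ c) (hbc : b ≠ c)
    (hae : a ∈ Metric.sphere e t) (hbe : b ∈ Metric.sphere e t) (hce : c ∈ Metric.sphere e t)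
    (haf : a ∈ Metric.sphere f t) (hbf : b ∈ Metric.sphere f t) (hcf : c ∈ Metric.sphere f t)
    (ht : 0 ≤ t) : False := by
  rw [mem_sphere_iff2 ht] at hae hbe hce haf hbf hcf
  set w0 : ℝ := 2*(f 0 - e 0) with hw0
  set w1 : ℝ := 2*(f 1 - e 1) with hw1
  set m : ℝ := (f 0)^2 + (f 1)^2 - (e 0)^2 - (e 1)^2 with hm
  have la : w0 * a 0 + w1 * a 1 = m := by rw [hw0, hw1, hm]; linear_combination hae - haf
  have lb : w0 * b 0 + w1 * b 1 = m := by rw [hw0, hw1, hm]; linear_combination hbe - hbf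
  have lc : w0 * c 0 + w1 * c 1 = m := by rw [hw0, hw1, hm]; linear_combination hce - hcf
  have hne : ∀ x y : EuclideanSpace ℝ (Fin 2), x ≠ y → x 0 ≠ y 0 ∨ x 1 ≠ y 1 := by
    intro x y hxy
    by_contra h
    push_neg at h
    exact hxy (ext2 h.1 h.2)
  have hw : w0 ≠ 0 ∨ w1 ≠ 0 := by
    rcases hne f e (Ne.symm hef) with h | h
    · left; rw [hw0]; intro h'; apply h; linarith
    · right; rw [hw1]; intro h'; apply h; linarith
  rcases hw with h | h
  · refine line_circle (w0 := w1) (w1 := w0) (m := m) (e0 := e 1) (e1 := e 0) (t := t)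
      (a0 := a 1) (a1 := a 0) (b0 := b 1) (b1 := b 0) (c0 := c 1) (c1 := c 0) h
      (by linarith) (by linarith) (by linarith)
      (by linarith) (by linarith) (by linarith)
      ((hne a b hab).symm) ((hne a c hac).symm) ((hne b c hbc).symm)
  · exact line_circle h la lb lc hae hbe hce (hne a b hab) (hne a c hac) (hne b c hbc)

end Aux

theorem vc_dimension_of_circles (t : ℝ) (ht : 0 < t) :
    (∃ C : Set (EuclideanSpace ℝ (Fin 2)), C.ncard = 3 ∧
      Shatters {S | ∃ e : EuclideanSpace ℝ (Fin 2), S = Metric.sphere e t} C) ∧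
    (∀ C : Set (EuclideanSpace ℝ (Fin 2)), C.ncard = 4 →
      ¬ Shatters {S | ∃ e : EuclideanSpace ℝ (Fin 2), S = Metric.sphere e t} C) := by
  constructor
  · -- a triangle inscribed in a circle of radius `t` is shattered
    refine ⟨{pt t 0, pt (3*t/5) (4*t/5), pt (3*t/5) (-(4*t/5))}, ?_, ?_⟩
    · refine Set.ncard_eq_three.mpr ⟨_, _, _, ?_, ?_, ?_, rfl⟩
      · intro h; have := (pt_inj h).1; linarith
      · intro h; have := (pt_inj h).1; linarith
      · intro h; have := (pt_inj h).2; linarith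
    · intro D hD
      by_cases ha : pt t 0 ∈ D <;> by_cases hb : pt (3*t/5) (4*t/5) ∈ D <;>
        by_cases hc : pt (3*t/5) (-(4*t/5)) ∈ D
      · refine ⟨_, ⟨pt 0 0, rfl⟩, inter_eq_of hD ?_⟩
        rintro x (rfl | rfl | rfl) <;> rw [pt_sphere ht.le] <;>
          first
          | exact iff_of_true (by ring) (by assumption)
          | exact iff_of_false (fun h => by nlinarith [mul_pos ht ht]) (by assumption)
      · refine ⟨_, ⟨pt (8*t/5) (4*t/5), rfl⟩, inter_eq_of hD ?_⟩
        rintro x (rfl | rfl | rfl) <;> rw [pt_sphere ht.le] <;>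
          first
          | exact iff_of_true (by ring) (by assumption)
          | exact iff_of_false (fun h => by nlinarith [mul_pos ht ht]) (by assumption)
      · refine ⟨_, ⟨pt (8*t/5) (-(4*t/5)), rfl⟩, inter_eq_of hD ?_⟩
        rintro x (rfl | rfl | rfl) <;> rw [pt_sphere ht.le] <;>
          first
          | exact iff_of_true (by ring) (by assumption)
          | exact iff_of_false (fun h => by nlinarith [mul_pos ht ht]) (by assumption)
      · refine ⟨_, ⟨pt (2*t) 0, rfl⟩, inter_eq_of hD ?_⟩
        rintro x (rfl | rfl | rfl) <;> rw [pt_sphere ht.le] <;>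
          first
          | exact iff_of_true (by ring) (by assumption)
          | exact iff_of_false (fun h => by nlinarith [mul_pos ht ht]) (by assumption)
      · refine ⟨_, ⟨pt (6*t/5) 0, rfl⟩, inter_eq_of hD ?_⟩
        rintro x (rfl | rfl | rfl) <;> rw [pt_sphere ht.le] <;>
          first
          | exact iff_of_true (by ring) (by assumption)
          | exact iff_of_false (fun h => by nlinarith [mul_pos ht ht]) (by assumption)
      · refine ⟨_, ⟨pt (6*t/5) (8*t/5), rfl⟩, inter_eq_of hD ?_⟩
        rintro x (rfl | rfl | rfl) <;> rw [pt_sphere ht.le] <;>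
          first
          | exact iff_of_true (by ring) (by assumption)
          | exact iff_of_false (fun h => by nlinarith [mul_pos ht ht]) (by assumption)
      · refine ⟨_, ⟨pt (6*t/5) (-(8*t/5)), rfl⟩, inter_eq_of hD ?_⟩
        rintro x (rfl | rfl | rfl) <;> rw [pt_sphere ht.le] <;>
          first
          | exact iff_of_true (by ring) (by assumption)
          | exact iff_of_false (fun h => by nlinarith [mul_pos ht ht]) (by assumption)
      · refine ⟨_, ⟨pt (5*t) 0, rfl⟩, inter_eq_of hD ?_⟩
        rintro x (rfl | rfl | rfl) <;> rw [pt_sphere ht.le] <;>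
          first
          | exact iff_of_true (by ring) (by assumption)
          | exact iff_of_false (fun h => by nlinarith [mul_pos ht ht]) (by assumption)
  · -- no four points can be shattered
    intro C hC4 hS
    have hfin : C.Finite := by
      by_contra h
      rw [Set.Infinite.ncard h] at hC4
      exact absurd hC4 (by norm_num)
    obtain ⟨d, hd⟩ := Set.nonempty_of_ncard_ne_zero (s := C) (by rw [hC4]; norm_num)
    obtain ⟨T, ⟨e, rfl⟩, hTe⟩ := hS C subset_rfl
    obtain ⟨T', ⟨f, rfl⟩, hTf⟩ := hS (C \ {d}) Set.diff_subset
    have hCe : ∀ x ∈ C, x ∈ Metric.sphere e t := by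
      intro x hx
      have : x ∈ Metric.sphere e t ∩ C := by rw [hTe]; exact hx
      exact this.1
    have hcard3 : (C \ {d}).ncard = 3 := by
      rw [Set.ncard_diff_singleton_of_mem hd, hC4]
    obtain ⟨a, b, c, hab, hac, hbc, hCd⟩ := Set.ncard_eq_three.mp hcard3
    have hmem : ∀ x ∈ C \ {d}, x ∈ Metric.sphere f t := by
      intro x hx
      rw [← hTf] at hx
      exact hx.1
    have hdf : d ∉ Metric.sphere f t := by
      intro h
      have : d ∈ C \ {d} := by rw [← hTf]; exact ⟨h, hd⟩
      exact this.2 rfl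
    have hef : e ≠ f := by
      rintro rfl
      exact hdf (hCe d hd)
    have ha' : a ∈ C \ {d} := by rw [hCd]; simp
    have hb' : b ∈ C \ {d} := by rw [hCd]; simp
    have hc' : c ∈ C \ {d} := by rw [hCd]; simp
    exact two_spheres hef hab hac hbc
      (hCe a ha'.1) (hCe b hb'.1) (hCe c hc'.1)
      (hmem a ha') (hmem b hb') (hmem c hc') ht.le
end
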